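/- Let c, d be coprime positive integers, m, n positive integers with 0 < ⌊n/d⌋ ≤ ⌊m/c⌋, n̄ = n mod d, and q a positive integer. The number of nonattacking configurations of q one-move riders with move (c,d) on the m×n board equals the sum over tuples of nonnegative integers (k, j, x₁,…,x_{2cd}) with k + j + x₁ + ⋯ + x_{2cd} = q of C((d-n̄)(m-c⌊n/d⌋)+c(n̄+d), j)·⌊n/d⌋^j · C(n̄(m-c⌊n/d⌋), k)·(⌊n/d⌋+1)^k · Π_{i=1}^{2cd} [⌊n/d⌋ brack ⌊n/d⌋ - xᵢ], where [· brack ·] denotes unsigned Stirling numbers of the first kind. -/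

import Mathlib

/-- The `m × n` board as a finite set of lattice points. -/
noncomputable def board (m n : ℕ) : Finset (ℤ × ℤ) := Finset.Icc (1 : ℤ) m ×ˢ Finset.Icc (1 : ℤ) n

/-- The number of nonattacking placements of `q` one-move riders with move `(c,d)`
on the `m × n` board: two pieces attack iff they lie on a common line of slope `d/c`,
i.e. iff they share the invariant `p ↦ d·p₁ - c·p₂`. -/
noncomputable def nonattack (c d m n q : ℕ) : ℕ :=
  (((board m n).powersetCard q).filter
    (fun S => ∀ p ∈ S, ∀ p' ∈ S,
      (d : ℤ) * p.1 - (c : ℤ) * p.2 = (d : ℤ) * p'.1 - (c : ℤ) * p'.2 → p = p')).card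

/-- Unsigned Stirling numbers of the first kind. -/
def stirling1 : ℕ → ℕ → ℕ
  | 0, 0 => 1
  | 0, _ + 1 => 0
  | _ + 1, 0 => 0
  | n + 1, k + 1 => n * stirling1 n (k + 1) + stirling1 n k

/-! ### Auxiliary definitions -/

/-- The line invariant. -/
def phi (c d : ℕ) (p : ℤ × ℤ) : ℤ := (d : ℤ) * p.1 - (c : ℤ) * p.2

/-- The set of board points on the line with invariant `v`. -/
noncomputable def fib (c d m n : ℕ) (v : ℤ) : Finset (ℤ × ℤ) := (board m n).filter (fun p => phi c d p = v)

/-- The number of board points on the line with invariant `v`. -/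
noncomputable def Nv (c d m n : ℕ) (v : ℤ) : ℕ := (fib c d m n v).card

/-- The set of invariant values achieved on the board. -/
noncomputable def vals (c d m n : ℕ) : Finset ℤ := (board m n).image (phi c d)

/-- Board points that start an `(e+1)`-point run in direction `(c,d)`. -/
noncomputable def Bs (c d m n e : ℕ) : Finset (ℤ × ℤ) :=
  (board m n).filter (fun p => p.1 + (e:ℤ) * c ≤ m ∧ p.2 + (e:ℤ) * d ≤ n)

open Polynomial Finset

/-! ### Generic polynomial coefficient lemmas -/

lemma coeff_prod_one_add {α : Type*} [DecidableEq α] (s : Finset α) (a : α → ℕ) :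
    ∀ q : ℕ, (∏ v ∈ s, (1 + C (a v) * X)).coeff q
      = ∑ T ∈ s.powersetCard q, ∏ v ∈ T, a v := by
  induction s using Finset.induction_on with
  | empty =>
    intro q
    cases q with
    | zero => simp
    | succ q =>
      rw [Finset.powersetCard_eq_empty.2 (by simp), Finset.sum_empty]
      simp [Polynomial.coeff_one]
  | @insert x s hx ih =>
    intro q
    rw [Finset.prod_insert hx]
    have expand : ((1 + C (a x) * X) * ∏ v ∈ s, (1 + C (a v) * X)).coeff q
        = (∏ v ∈ s, (1 + C (a v) * X)).coeff q
          + a x * ((X : ℕ[X]) * ∏ v ∈ s, (1 + C (a v) * X)).coeff q := by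
      rw [add_mul, one_mul, Polynomial.coeff_add, mul_assoc, Polynomial.coeff_C_mul]
    rw [expand]
    cases q with
    | zero =>
      rw [Polynomial.coeff_X_mul_zero, ih]
      simp
    | succ q =>
      rw [Polynomial.coeff_X_mul, ih, ih, Finset.powersetCard_succ_insert hx,
        Finset.sum_union, Finset.sum_image]
      · congr 1
        rw [Finset.mul_sum]
        refine Finset.sum_congr rfl fun T hT => ?_
        rw [Finset.prod_insert fun hxT => hx ((Finset.mem_powersetCard.1 hT).1 hxT)]
      · intro T hT T' hT' hTT'
        have h1 : x ∉ T := fun h => hx ((Finset.mem_powersetCard.1 hT).1 h)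
        have h2 : x ∉ T' := fun h => hx ((Finset.mem_powersetCard.1 hT').1 h)
        rw [← Finset.erase_insert h1, ← Finset.erase_insert h2, hTT']
      · rw [Finset.disjoint_right]
        rintro T hT hT'
        obtain ⟨T', hT', rfl⟩ := Finset.mem_image.1 hT
        exact hx ((Finset.mem_powersetCard.1 hT').1 (Finset.mem_insert_self x T'))

lemma coeff_prod_fin : ∀ (K : ℕ) (p : Fin K → ℕ[X]) (q : ℕ),
    (∏ i, p i).coeff q = ∑ f ∈ Finset.Nat.antidiagonalTuple K q, ∏ i, (p i).coeff (f i)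
  | 0, p, 0 => by simp
  | 0, p, (q+1) => by simp [Polynomial.coeff_one]
  | (K+1), p, q => by
    rw [Fin.prod_univ_succ, Polynomial.coeff_mul]
    have : ∀ ab : ℕ × ℕ, (∏ i : Fin K, p i.succ).coeff ab.2
        = ∑ f ∈ Finset.Nat.antidiagonalTuple K ab.2, ∏ i, (p i.succ).coeff (f i) :=
      fun ab => coeff_prod_fin K _ ab.2
    simp_rw [this, Finset.mul_sum]
    refine Eq.trans (Finset.sum_sigma' (Finset.HasAntidiagonal.antidiagonal q)
      (fun ab : ℕ × ℕ => Finset.Nat.antidiagonalTuple K ab.2)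
      (fun (ab : ℕ × ℕ) (f : Fin K → ℕ) => (p 0).coeff ab.1 * ∏ i, (p i.succ).coeff (f i))) ?_
    refine Finset.sum_nbij' (fun x => Fin.cons x.1.1 x.2)
      (fun g => ⟨(g 0, ∑ i : Fin K, g i.succ), fun i => g i.succ⟩) ?_ ?_ ?_ ?_ ?_
    · rintro ⟨⟨a, b⟩, f⟩ hx
      simp only [Finset.mem_sigma, Finset.mem_antidiagonal,
        Finset.Nat.mem_antidiagonalTuple] at hx ⊢
      rw [Fin.sum_cons, hx.2]
      simpa using hx.1
    · intro g hg
      simp only [Finset.Nat.mem_antidiagonalTuple] at hg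
      simp only [Finset.mem_sigma, Finset.mem_antidiagonal,
        Finset.Nat.mem_antidiagonalTuple]
      refine ⟨by simp [Finset.mem_antidiagonal, ← hg, Fin.sum_univ_succ], ?_⟩
      simp only [Finset.Nat.mem_antidiagonalTuple]
    · rintro ⟨⟨a, b⟩, f⟩ hx
      simp only [Finset.mem_sigma, Finset.mem_antidiagonal,
        Finset.Nat.mem_antidiagonalTuple] at hx
      simp only [Fin.cons_zero, Fin.cons_succ]
      exact Sigma.ext (by simp [hx.2]) (by simp)
    · intro g hg
      exact Fin.cons_self_tail g
    · rintro ⟨⟨a, b⟩, f⟩ hx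
      simp only [Fin.cons_zero, Fin.cons_succ]
      rw [Fin.prod_univ_succ, Fin.cons_zero]
      simp [Fin.cons_succ]

/-! ### Stirling numbers -/

lemma stirling1_zero_of_lt : ∀ {n k : ℕ}, n < k → stirling1 n k = 0
  | 0, _+1, _ => rfl
  | n+1, k+1, h => by
    rw [stirling1, stirling1_zero_of_lt (by omega : n < k + 1),
      stirling1_zero_of_lt (by omega : n < k)]
    simp

lemma stirling1_self : ∀ n : ℕ, stirling1 n n = 1
  | 0 => rfl
  | n+1 => by
    rw [stirling1, stirling1_zero_of_lt (Nat.lt_succ_self n), stirling1_self n]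
    simp

lemma coeff_one_add_mul (a : ℕ) (P : ℕ[X]) (y : ℕ) :
    ((1 + C a * X) * P).coeff y = P.coeff y + a * (X * P).coeff y := by
  rw [add_mul, one_mul, Polynomial.coeff_add, mul_assoc, Polynomial.coeff_C_mul]

lemma coeff_stirling : ∀ (u x : ℕ),
    (∏ s ∈ Finset.Ioc 0 u, (1 + C (s : ℕ) * X)).coeff x = stirling1 (u+1) (u+1-x)
  | 0, 0 => by simp [stirling1_self]
  | 0, x+1 => by
    simp [Polynomial.coeff_one, show (1:ℕ) - (x+1) = 0 by omega,
      show stirling1 1 0 = 0 from rfl]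
  | u+1, x => by
    rw [Finset.prod_Ioc_succ_top (Nat.zero_le u), mul_comm, coeff_one_add_mul]
    cases x with
    | zero =>
      rw [Polynomial.coeff_X_mul_zero, coeff_stirling u 0]
      simp [stirling1_self]
    | succ y =>
      rw [Polynomial.coeff_X_mul, coeff_stirling u (y+1), coeff_stirling u y]
      push_cast
      rcases le_or_gt y u with hy | hy
      · rw [show u + 1 - y = (u - y) + 1 by omega]
        conv_rhs => rw [show u + 1 + 1 = (u + 1) + 1 from rfl, stirling1]
        ring
      · rw [show u - y = 0 by omega, show u + 1 - y = 0 by omega,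
          show stirling1 (u+1) 0 = 0 from rfl, show stirling1 (u+1+1) 0 = 0 from rfl]
        simp

lemma coeff_pow_one_add (a A q : ℕ) : ((1 + C a * X : ℕ[X])^A).coeff q = A.choose q * a ^ q := by
  have h := coeff_prod_one_add (Finset.range A) (fun _ => a) q
  rw [Finset.prod_const, Finset.card_range] at h
  rw [h, Finset.sum_congr rfl (fun T hT => ?_), Finset.sum_const,
    Finset.card_powersetCard, Finset.card_range, smul_eq_mul]
  rw [Finset.prod_const, (Finset.mem_powersetCard.1 hT).2]

/-! ### Geometry of lines on the board -/

section
variable {c d m n : ℕ}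

lemma mem_board {p : ℤ × ℤ} : p ∈ board m n ↔
    1 ≤ p.1 ∧ p.1 ≤ m ∧ 1 ≤ p.2 ∧ p.2 ≤ n := by
  simp [board, Finset.mem_Icc]; tauto

lemma nat_downward_closed (S : Finset ℕ) (h : ∀ i ∈ S, ∀ j ≤ i, j ∈ S) :
    S = Finset.range S.card := by
  ext k
  simp only [Finset.mem_range]
  constructor
  · intro hk
    have hsub : Finset.range (k+1) ⊆ S := fun j hj =>
      h k hk j (by simpa using Nat.lt_succ_iff.1 (Finset.mem_range.1 hj))
    have := Finset.card_le_card hsub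
    simpa using this
  · intro hk
    by_contra hkS
    have hsub : S ⊆ Finset.range k := by
      intro i hi
      simp only [Finset.mem_range]
      by_contra hik
      exact hkS (h i hi k (by omega))
    have := Finset.card_le_card hsub
    simp at this
    omega

lemma g_inj (hc : 0 < c) (p₀ : ℤ × ℤ) :
    Function.Injective (fun i : ℕ => (p₀.1 + (c:ℤ) * i, p₀.2 + (d:ℤ) * i)) := by
  intro i j hij
  have h1 : p₀.1 + (c:ℤ) * i = p₀.1 + (c:ℤ) * j := congrArg Prod.fst hij
  have hcne : (c:ℤ) ≠ 0 := by exact_mod_cast hc.ne'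
  have h2 : (c:ℤ) * i = (c:ℤ) * j := by linarith
  have h3 : (i : ℤ) = j := mul_left_cancel₀ hcne h2
  exact_mod_cast h3

lemma fiber_run (hc : 0 < c) (hd : 0 < d) (hcd : Nat.Coprime c d) {v : ℤ}
    (hv : v ∈ vals c d m n) :
    ∃ p₀ : ℤ × ℤ, fib c d m n v
      = (Finset.range (Nv c d m n v)).image
          (fun i : ℕ => (p₀.1 + (c:ℤ) * i, p₀.2 + (d:ℤ) * i)) := by
  obtain ⟨p, hpb, hpv⟩ := Finset.mem_image.1 hv
  have hpf : p ∈ fib c d m n v := Finset.mem_filter.2 ⟨hpb, hpv⟩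
  obtain ⟨p₀, hp₀f, hmin⟩ := Finset.exists_min_image (fib c d m n v) Prod.fst ⟨p, hpf⟩
  have hp₀b : p₀ ∈ board m n := (Finset.mem_filter.1 hp₀f).1
  have hp₀v : phi c d p₀ = v := (Finset.mem_filter.1 hp₀f).2
  set g : ℕ → ℤ × ℤ := fun i => (p₀.1 + (c:ℤ) * i, p₀.2 + (d:ℤ) * i) with hg
  have ginj : Function.Injective g := g_inj hc p₀
  have claim1 : ∀ q ∈ fib c d m n v, ∃ i : ℕ, q = g i := by
    intro q hq
    have hqv : phi c d q = v := (Finset.mem_filter.1 hq).2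
    have key : (d:ℤ) * (q.1 - p₀.1) = (c:ℤ) * (q.2 - p₀.2) := by
      have h := hqv.trans hp₀v.symm
      unfold phi at h
      linear_combination h
    have hdvd : (c:ℤ) ∣ (q.1 - p₀.1) := by
      have hco : IsCoprime (c:ℤ) (d:ℤ) := hcd.isCoprime
      have hw : (q.1 - p₀.1) * (d:ℤ) = (c:ℤ) * (q.2 - p₀.2) := by linear_combination key
      exact hco.dvd_of_dvd_mul_right ⟨_, hw⟩
    obtain ⟨k, hk⟩ := hdvd
    have hknn : 0 ≤ k := by
      have h1 : p₀.1 ≤ q.1 := hmin q hq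
      have hc' : (0:ℤ) < c := by exact_mod_cast hc
      nlinarith
    have hk2 : q.2 - p₀.2 = (d:ℤ) * k := by
      have hcne : (c:ℤ) ≠ 0 := by exact_mod_cast hc.ne'
      have : (c:ℤ) * ((d:ℤ) * k) = (c:ℤ) * (q.2 - p₀.2) := by rw [← key, hk]; ring
      exact (mul_left_cancel₀ hcne this).symm
    refine ⟨k.toNat, ?_⟩
    have hkk : ((k.toNat : ℤ)) = k := Int.toNat_of_nonneg hknn
    apply Prod.ext
    · simp only [hg, hkk]; linarith [hk]
    · simp only [hg, hkk]; linarith [hk2]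
  have claim2 : ∀ i j : ℕ, j ≤ i → g i ∈ fib c d m n v → g j ∈ fib c d m n v := by
    intro i j hji hgi
    have hib : g i ∈ board m n := (Finset.mem_filter.1 hgi).1
    refine Finset.mem_filter.2 ⟨?_, ?_⟩
    · rw [mem_board] at hib hp₀b ⊢
      simp only [hg] at hib ⊢
      have hji' : (j:ℤ) ≤ i := by exact_mod_cast hji
      have hc' : (0:ℤ) ≤ c := by positivity
      have hd' : (0:ℤ) ≤ d := by positivity
      have hj' : (0:ℤ) ≤ j := by positivity
      have e1 : (0:ℤ) ≤ (c:ℤ) * j := mul_nonneg hc' hj'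
      have e2 : (c:ℤ) * j ≤ (c:ℤ) * i := mul_le_mul_of_nonneg_left hji' hc'
      have e3 : (0:ℤ) ≤ (d:ℤ) * j := mul_nonneg hd' hj'
      have e4 : (d:ℤ) * j ≤ (d:ℤ) * i := mul_le_mul_of_nonneg_left hji' hd'
      refine ⟨by linarith [hp₀b.1], by linarith [hib.2.1],
        by linarith [hp₀b.2.2.1], by linarith [hib.2.2.2]⟩
    · unfold phi
      simp only [hg]
      rw [← hp₀v]
      unfold phi
      ring
  set S : Finset ℕ := (Finset.range (Nv c d m n v + 1)).filter (fun i => g i ∈ fib c d m n v)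
    with hS
  have hbound : ∀ i : ℕ, g i ∈ fib c d m n v → i < Nv c d m n v + 1 := by
    intro i hgi
    have hsub : (Finset.range (i+1)).image g ⊆ fib c d m n v := by
      intro x hx
      obtain ⟨j, hj, rfl⟩ := Finset.mem_image.1 hx
      exact claim2 i j (by have := Finset.mem_range.1 hj; omega) hgi
    have hcard : ((Finset.range (i+1)).image g).card = i + 1 := by
      rw [Finset.card_image_of_injective _ ginj, Finset.card_range]
    have hle := Finset.card_le_card hsub
    rw [hcard] at hle
    have hNv : Nv c d m n v = (fib c d m n v).card := rfl
    omega
  have hfib_eq : fib c d m n v = S.image g := by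
    apply Finset.Subset.antisymm
    · intro q hq
      obtain ⟨i, rfl⟩ := claim1 q hq
      exact Finset.mem_image_of_mem g
        (Finset.mem_filter.2 ⟨Finset.mem_range.2 (hbound i hq), hq⟩)
    · intro q hq
      obtain ⟨i, hi, rfl⟩ := Finset.mem_image.1 hq
      exact (Finset.mem_filter.1 hi).2
  have hScard : S.card = Nv c d m n v := by
    have : (S.image g).card = S.card := Finset.card_image_of_injective _ ginj
    unfold Nv
    rw [hfib_eq, this]
  have hdc : S = Finset.range S.card := by
    apply nat_downward_closed
    intro i hi j hji
    obtain ⟨hi1, hi2⟩ := Finset.mem_filter.1 hi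
    exact Finset.mem_filter.2 ⟨Finset.mem_range.2
      (by have := Finset.mem_range.1 hi1; omega), claim2 i j hji hi2⟩
  refine ⟨p₀, ?_⟩
  rw [hfib_eq, hdc, hScard, hg]

lemma Nv_pos {v : ℤ} (hv : v ∈ vals c d m n) : 0 < Nv c d m n v := by
  obtain ⟨p, hpb, hpv⟩ := Finset.mem_image.1 hv
  exact Finset.card_pos.2 ⟨p, Finset.mem_filter.2 ⟨hpb, hpv⟩⟩

lemma Bs_card1 (e : ℕ) : (Bs c d m n e).card = (m - e*c) * (n - e*d) := by
  have heq : Bs c d m n e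
      = Finset.Icc (1:ℤ) ((m:ℤ) - (e*c : ℕ)) ×ˢ Finset.Icc (1:ℤ) ((n:ℤ) - (e*d : ℕ)) := by
    ext p
    simp only [Bs, board, Finset.mem_filter, Finset.mem_product, Finset.mem_Icc]
    push_cast
    constructor
    · rintro ⟨⟨⟨h1, h2⟩, h3, h4⟩, h5, h6⟩
      exact ⟨⟨h1, by linarith⟩, h3, by linarith⟩
    · rintro ⟨⟨h1, h2⟩, h3, h4⟩
      have hc0 : (0:ℤ) ≤ (e:ℤ) * c := by positivity
      have hd0 : (0:ℤ) ≤ (e:ℤ) * d := by positivity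
      exact ⟨⟨⟨h1, by linarith⟩, h3, by linarith⟩, by linarith, by linarith⟩
  rw [heq, Finset.card_product, Int.card_Icc, Int.card_Icc]
  have e1 : ((m:ℤ) - (e*c : ℕ) + 1 - 1).toNat = m - e*c := by omega
  have e2 : ((n:ℤ) - (e*d : ℕ) + 1 - 1).toNat = n - e*d := by omega
  rw [e1, e2]

lemma Bs_card2 (hc : 0 < c) (hd : 0 < d) (hcd : Nat.Coprime c d) (e : ℕ) :
    (Bs c d m n e).card = ∑ v ∈ vals c d m n, (Nv c d m n v - e) := by
  have hmap : ∀ p ∈ Bs c d m n e, phi c d p ∈ vals c d m n := fun p hp =>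
    Finset.mem_image_of_mem _ (Finset.mem_filter.1 hp).1
  rw [Finset.card_eq_sum_card_fiberwise hmap]
  refine Finset.sum_congr rfl fun v hv => ?_
  obtain ⟨p₀, hfib⟩ := fiber_run hc hd hcd hv
  set g : ℕ → ℤ × ℤ := fun i : ℕ => (p₀.1 + (c:ℤ) * i, p₀.2 + (d:ℤ) * i) with hg
  have hginj : Function.Injective g := g_inj hc p₀
  have hsplit : (Bs c d m n e).filter (fun p => phi c d p = v)
      = (fib c d m n v).filter (fun p => p.1 + (e:ℤ) * c ≤ m ∧ p.2 + (e:ℤ) * d ≤ n) := by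
    ext p
    simp only [Bs, fib, Finset.mem_filter]
    tauto
  have hphig : ∀ j : ℕ, phi c d (g j) = phi c d (g 0) := by
    intro j
    simp only [hg, phi]
    push_cast
    ring
  have hmemfib : ∀ j : ℕ, g j ∈ fib c d m n v ↔ j < Nv c d m n v := by
    intro j
    constructor
    · intro hj
      rw [hfib] at hj
      obtain ⟨i, hi, hij⟩ := Finset.mem_image.1 hj
      rw [← hginj hij]
      exact Finset.mem_range.1 hi
    · intro hj
      rw [hfib]
      exact Finset.mem_image_of_mem g (Finset.mem_range.2 hj)
  have hcond : ∀ i : ℕ, i < Nv c d m n v →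
      (((g i).1 + (e:ℤ) * c ≤ m ∧ (g i).2 + (e:ℤ) * d ≤ n) ↔ i + e < Nv c d m n v) := by
    intro i hi
    constructor
    · intro hcnd
      rw [← hmemfib]
      have hgib : g i ∈ board m n := (Finset.mem_filter.1 ((hmemfib i).2 hi)).1
      rw [mem_board] at hgib
      refine Finset.mem_filter.2 ⟨?_, by rw [hphig, ← hphig i]
                                         exact (Finset.mem_filter.1 ((hmemfib i).2 hi)).2⟩
      rw [mem_board]
      simp only [hg] at hgib hcnd ⊢
      push_cast
      constructor
      · have : (0:ℤ) ≤ (c:ℤ) * e := by positivity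
        linarith [hgib.1]
      refine ⟨by linarith [hcnd.1], ?_, ?_⟩
      · have : (0:ℤ) ≤ (d:ℤ) * e := by positivity
        linarith [hgib.2.2.1]
      · linarith [hcnd.2]
    · intro hie
      have hgie : g (i + e) ∈ board m n := (Finset.mem_filter.1 ((hmemfib _).2 hie)).1
      rw [mem_board] at hgie
      simp only [hg] at hgie ⊢
      push_cast at hgie ⊢
      exact ⟨by linarith [hgie.2.1], by linarith [hgie.2.2.2]⟩
  rw [hsplit, hfib]
  rw [Finset.filter_image]
  rw [Finset.card_image_of_injective _ hginj]
  have hfilt : (Finset.range (Nv c d m n v)).filter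
      (fun i => (g i).1 + (e:ℤ) * c ≤ m ∧ (g i).2 + (e:ℤ) * d ≤ n)
      = Finset.range (Nv c d m n v - e) := by
    ext i
    simp only [Finset.mem_filter, Finset.mem_range]
    constructor
    · rintro ⟨hi, hcnd⟩
      have := (hcond i hi).1 hcnd
      omega
    · intro hi
      have hiN : i < Nv c d m n v := by omega
      exact ⟨hiN, (hcond i hiN).2 (by omega)⟩
  rw [hfilt, Finset.card_range]

lemma G_count (hc : 0 < c) (hd : 0 < d) (hcd : Nat.Coprime c d) (e : ℕ) :
    (Bs c d m n e).card = (Bs c d m n (e+1)).card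
      + ((vals c d m n).filter (fun v => e + 1 ≤ Nv c d m n v)).card := by
  rw [Bs_card2 hc hd hcd, Bs_card2 hc hd hcd, Finset.card_filter, ← Finset.sum_add_distrib]
  refine Finset.sum_congr rfl fun v hv => ?_
  by_cases h : e + 1 ≤ Nv c d m n v
  · rw [if_pos h]; omega
  · rw [if_neg h]; omega

/-! ### The transversal count -/

lemma transversal (q : ℕ) :
    (((board m n).powersetCard q).filter
      (fun S => ∀ p ∈ S, ∀ p' ∈ S, phi c d p = phi c d p' → p = p')).card
    = ∑ T ∈ (vals c d m n).powersetCard q, ∏ v ∈ T, Nv c d m n v := by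
  have hmaps : ∀ S ∈ ((board m n).powersetCard q).filter
      (fun S => ∀ p ∈ S, ∀ p' ∈ S, phi c d p = phi c d p' → p = p'),
      S.image (phi c d) ∈ (vals c d m n).powersetCard q := by
    intro S hS
    obtain ⟨hSp, hSi⟩ := Finset.mem_filter.1 hS
    obtain ⟨hSb, hScard⟩ := Finset.mem_powersetCard.1 hSp
    refine Finset.mem_powersetCard.2 ⟨Finset.image_subset_image hSb, ?_⟩
    rw [Finset.card_image_of_injOn (fun p hp p' hp' => hSi p hp p' hp'), hScard]
  rw [Finset.card_eq_sum_card_fiberwise hmaps]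
  refine Finset.sum_congr rfl fun T hT => ?_
  obtain ⟨hTv, hTcard⟩ := Finset.mem_powersetCard.1 hT
  have hpi : ∏ v ∈ T, Nv c d m n v = (T.pi (fun v => fib c d m n v)).card := by
    rw [Finset.card_pi]
    rfl
  rw [hpi]
  have h_exu : ∀ S ∈ (((board m n).powersetCard q).filter
      (fun S => ∀ p ∈ S, ∀ p' ∈ S, phi c d p = phi c d p' → p = p')).filter
      (fun S => S.image (phi c d) = T),
      ∀ v ∈ T, ∃! p, p ∈ S ∧ phi c d p = v := by
    intro S hS v hv
    obtain ⟨hS1, hS2⟩ := Finset.mem_filter.1 hS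
    obtain ⟨_, hSi⟩ := Finset.mem_filter.1 hS1
    rw [← hS2] at hv
    obtain ⟨p, hp, hpv⟩ := Finset.mem_image.1 hv
    exact ⟨p, ⟨hp, hpv⟩, fun p' hp' => hSi p' hp'.1 p hp (hp'.2.trans hpv.symm)⟩
  refine Finset.card_bij'
    (fun S hS => fun v hv => S.choose (fun p => phi c d p = v) (h_exu S hS v hv))
    (fun g _ => T.attach.image (fun v => g v.1 v.2)) ?_ ?_ ?_ ?_
  · intro S hS
    rw [Finset.mem_pi]
    intro v hv
    obtain ⟨hS1, hS2⟩ := Finset.mem_filter.1 hS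
    obtain ⟨hSp, _⟩ := Finset.mem_filter.1 hS1
    obtain ⟨hSb, _⟩ := Finset.mem_powersetCard.1 hSp
    exact Finset.mem_filter.2 ⟨hSb (Finset.choose_mem _ _ _),
      Finset.choose_property (fun p => phi c d p = v) _ _⟩
  · intro g hg
    rw [Finset.mem_pi] at hg
    have hphig : ∀ (v : {x // x ∈ T}), phi c d (g v.1 v.2) = v.1 := fun v =>
      (Finset.mem_filter.1 (hg v.1 v.2)).2
    have hb : ∀ (v : {x // x ∈ T}), g v.1 v.2 ∈ board m n := fun v =>
      (Finset.mem_filter.1 (hg v.1 v.2)).1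
    have hinj : ∀ v ∈ T.attach, ∀ w ∈ T.attach,
        g v.1 v.2 = g w.1 w.2 → v = w := by
      intro v _ w _ hvw
      have := hphig v
      rw [hvw, hphig w] at this
      exact Subtype.ext this.symm
    have hcard : (T.attach.image (fun v => g v.1 v.2)).card = q := by
      rw [Finset.card_image_of_injOn hinj, Finset.card_attach, hTcard]
    refine Finset.mem_filter.2 ⟨Finset.mem_filter.2
      ⟨Finset.mem_powersetCard.2 ⟨?_, hcard⟩, ?_⟩, ?_⟩
    · intro p hp
      obtain ⟨v, _, rfl⟩ := Finset.mem_image.1 hp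
      exact hb v
    · intro p hp p' hp' hpp'
      obtain ⟨v, _, rfl⟩ := Finset.mem_image.1 hp
      obtain ⟨w, _, rfl⟩ := Finset.mem_image.1 hp'
      rw [hphig v, hphig w] at hpp'
      rw [Subtype.ext hpp']
    · ext v
      simp only [Finset.mem_image]
      constructor
      · rintro ⟨p, ⟨w, _, rfl⟩, rfl⟩
        rw [hphig w]
        exact w.2
      · intro hv
        exact ⟨g v hv, ⟨⟨v, hv⟩, Finset.mem_attach _ _, rfl⟩, hphig ⟨v, hv⟩⟩
  · intro S hS
    obtain ⟨hS1, hS2⟩ := Finset.mem_filter.1 hS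
    obtain ⟨_, hSi⟩ := Finset.mem_filter.1 hS1
    apply Finset.Subset.antisymm
    · intro p hp
      obtain ⟨v, _, rfl⟩ := Finset.mem_image.1 hp
      exact Finset.choose_mem _ _ _
    · intro p hp
      have hv : phi c d p ∈ T := by
        rw [← hS2]; exact Finset.mem_image_of_mem _ hp
      refine Finset.mem_image.2 ⟨⟨phi c d p, hv⟩, Finset.mem_attach _ _, ?_⟩
      exact (h_exu S hS (phi c d p) hv).unique
        ⟨Finset.choose_mem _ _ _,
          Finset.choose_property (fun p' => phi c d p' = phi c d p) _ _⟩ ⟨hp, rfl⟩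
  · intro g hg
    funext v hv
    rw [Finset.mem_pi] at hg
    have hxu : ∃! p, p ∈ T.attach.image (fun w => g w.1 w.2) ∧ phi c d p = v := by
      refine ⟨g v hv, ⟨Finset.mem_image.2 ⟨⟨v, hv⟩, Finset.mem_attach _ _, rfl⟩,
        (Finset.mem_filter.1 (hg v hv)).2⟩, ?_⟩
      rintro p ⟨hp, hpv⟩
      obtain ⟨w, _, rfl⟩ := Finset.mem_image.1 hp
      have hwv : (w.1 : ℤ) = v := by
        rw [← hpv, (Finset.mem_filter.1 (hg w.1 w.2)).2]
      obtain ⟨w, hw⟩ := w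
      dsimp at hwv
      subst hwv
      rfl
    exact hxu.unique
      ⟨Finset.choose_mem _ _ _, Finset.choose_property (fun p => phi c d p = v) _ _⟩
      ⟨Finset.mem_image.2 ⟨⟨v, hv⟩, Finset.mem_attach _ _, rfl⟩,
        (Finset.mem_filter.1 (hg v hv)).2⟩

end

/-- Theorem 3.3: the number of nonattacking configurations of `q` one-move riders
with move `(c,d)` on the `m × n` board, as a sum over tuples
`(j, k, x₁, …, x_{2cd})` of nonnegative integers summing to `q` (here encoded as
`f : Fin (2cd+2) → ℕ` with `f 0 = j`, `f 1 = k`, `f (i+2) = xᵢ`). -/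
theorem one_move_rider_count (c d m n t r q : ℕ) (hc : 0 < c) (hd : 0 < d) (hm : 0 < m)
    (hn : 0 < n) (hcd : Nat.Coprime c d) (ht : t = n / d) (hr : r = n % d)
    (h1 : 0 < n / d) (h2 : n / d ≤ m / c) (hq : 0 < q) :
    nonattack c d m n q
      = ∑ f ∈ Finset.Nat.antidiagonalTuple (2 * c * d + 2) q,
          Nat.choose ((d - r) * (m - c * t) + c * (r + d)) (f 0) * t ^ (f 0) *
            (Nat.choose (r * (m - c * t)) (f 1) * (t + 1) ^ (f 1)) *
            ∏ i : Fin (2 * c * d), stirling1 t (t - f i.succ.succ) := by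
  classical
  have htpos : 0 < t := ht ▸ h1
  have hrd : r < d := by rw [hr]; exact Nat.mod_lt n hd
  have hn_eq : n = d * t + r := by rw [ht, hr]; exact (Nat.div_add_mod n d).symm
  have hctm : c * t ≤ m := by
    calc c * t ≤ c * (m / c) := Nat.mul_le_mul_left c (ht ▸ h2)
      _ ≤ m := Nat.mul_div_le m c
  have htdn : t * d ≤ n := by rw [hn_eq, mul_comm]; omega
  set V := vals c d m n with hV
  set NN := Nv c d m n with hNN
  set cnt : ℕ → ℕ := fun s => (V.filter (fun v => NN v = s)).card with hcnt
  set gfun : ℕ → ℕ := fun e => (V.filter (fun v => e + 1 ≤ NN v)).card with hgfun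
  set P : ℕ → ℕ := fun e => (m - e*c) * (n - e*d) with hP
  have E1 : ∀ e, P e = P (e+1) + gfun e := by
    intro e
    have h := G_count (c := c) (d := d) (m := m) (n := n) hc hd hcd e
    rw [Bs_card1, Bs_card1] at h
    exact h
  have gsplit : ∀ e, gfun e = cnt (e+1) + gfun (e+1) := by
    intro e
    simp only [hgfun, hcnt]
    rw [Finset.card_filter, Finset.card_filter, Finset.card_filter,
      ← Finset.sum_add_distrib]
    refine Finset.sum_congr rfl fun v hv => ?_
    split_ifs <;> omega
  have hPt1 : n - (t+1)*d = 0 := by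
    rw [hn_eq, add_mul, one_mul, mul_comm t d]
    omega
  have hPt10 : P (t+1) = 0 := by
    simp only [hP]
    rw [hPt1, mul_zero]
  have hNle : ∀ v ∈ V, NN v ≤ t + 1 := by
    intro v hv
    have hs := Bs_card2 (c := c) (d := d) (m := m) (n := n) hc hd hcd (t+1)
    rw [Bs_card1, hPt1, mul_zero] at hs
    have hz := (Finset.sum_eq_zero_iff.1 hs.symm) v hv
    simp only [hNN]
    omega
  have key : ∀ e, cnt (e+1) + 2 * P (e+1) = P e + P (e+2) := by
    intro e
    have h1' := E1 e
    have h2' := E1 (e+1)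
    rw [show e+1+1 = e+2 by omega] at h2'
    have h3' := gsplit e
    omega
  have f1 : ∀ e, e ≤ t → (P e : ℤ) = ((m:ℤ) - e*c) * ((n:ℤ) - e*d) := by
    intro e he
    have h1' : e*c ≤ m := by
      calc e*c ≤ t*c := Nat.mul_le_mul_right c he
        _ = c*t := mul_comm t c
        _ ≤ m := hctm
    have h2' : e*d ≤ n := le_trans (Nat.mul_le_mul_right d he) htdn
    simp only [hP]
    rw [Nat.cast_mul, Nat.cast_sub h1', Nat.cast_sub h2']
    push_cast
    ring
  have cnt_low : ∀ s ∈ Finset.Ioc 0 (t-1), cnt s = 2*c*d := by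
    intro s hs
    obtain ⟨hs1, hs2⟩ := Finset.mem_Ioc.1 hs
    obtain ⟨e, rfl⟩ : ∃ e, s = e + 1 := ⟨s - 1, by omega⟩
    have hk := key e
    have hcast : ((cnt (e+1) : ℤ)) + 2 * (P (e+1) : ℤ) = (P e : ℤ) + (P (e+2) : ℤ) := by
      exact_mod_cast hk
    rw [f1 e (by omega), f1 (e+1) (by omega), f1 (e+2) (by omega)] at hcast
    have hz : (cnt (e+1) : ℤ) = 2*c*d := by
      push_cast at hcast ⊢
      linear_combination hcast
    exact_mod_cast hz
  have hnz : (n:ℤ) = (d:ℤ)*t + r := by exact_mod_cast hn_eq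
  have cnt_t : cnt t = (d - r) * (m - c*t) + c * (r + d) := by
    have hk := key (t-1)
    rw [show t - 1 + 1 = t by omega, show t - 1 + 2 = t + 1 by omega, hPt10] at hk
    have hcast : ((cnt t : ℤ)) + 2 * (P t : ℤ) = (P (t-1) : ℤ) + 0 := by
      exact_mod_cast hk
    rw [f1 t le_rfl, f1 (t-1) (by omega)] at hcast
    rw [Nat.cast_sub (by omega : 1 ≤ t)] at hcast
    rw [hnz] at hcast
    zify [hrd.le, hctm]
    push_cast at hcast ⊢
    linear_combination hcast
  have hgt1 : gfun (t+1) = 0 := by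
    simp only [hgfun]
    rw [Finset.card_eq_zero, Finset.filter_eq_empty_iff]
    intro v hv
    have := hNle v hv
    omega
  have cnt_t1 : cnt (t+1) = r * (m - c*t) := by
    have h1' := E1 t
    have h2' := gsplit t
    have hPt : cnt (t+1) = P t := by omega
    rw [hPt]
    simp only [hP]
    have hnr : n - t*d = r := by
      rw [hn_eq, mul_comm t d]
      omega
    rw [hnr, mul_comm t c, mul_comm]
  -- polynomial assembly
  set Hp : ℕ[X] := ∏ s ∈ Finset.Ioc 0 (t-1), (1 + Polynomial.C (s:ℕ) * Polynomial.X) with hHp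
  have maps_to : ∀ v ∈ V, NN v ∈ Finset.Ioc 0 (t+1) := fun v hv =>
    Finset.mem_Ioc.2 ⟨Nv_pos hv, hNle v hv⟩
  have hfiber : ∏ v ∈ V, (1 + Polynomial.C (NN v) * Polynomial.X)
      = ∏ s ∈ Finset.Ioc 0 (t+1), (1 + Polynomial.C (s:ℕ) * Polynomial.X) ^ (cnt s) := by
    rw [← Finset.prod_fiberwise_of_maps_to maps_to
      (fun v => 1 + Polynomial.C (NN v) * Polynomial.X)]
    refine Finset.prod_congr rfl fun s hs => ?_
    have hin : ∀ v ∈ V.filter (fun v => NN v = s),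
        (1 + Polynomial.C (NN v) * Polynomial.X)
          = (1 + Polynomial.C (s:ℕ) * Polynomial.X) := fun v hv => by
      rw [(Finset.mem_filter.1 hv).2]
    rw [Finset.prod_congr rfl hin, Finset.prod_const]
  have hsplitIoc : ∏ s ∈ Finset.Ioc 0 (t+1), (1 + Polynomial.C (s:ℕ) * Polynomial.X) ^ (cnt s)
      = Hp^(2*c*d) * ((1 + Polynomial.C (t:ℕ) * Polynomial.X)^(cnt t)
          * (1 + Polynomial.C ((t:ℕ)+1) * Polynomial.X)^(cnt (t+1))) := by
    rw [← Finset.prod_Ioc_consecutive _ (Nat.zero_le (t-1)) (by omega : t-1 ≤ t+1)]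
    congr 1
    · rw [hHp, ← Finset.prod_pow]
      exact Finset.prod_congr rfl fun s hs => by rw [cnt_low s hs]
    · rw [Finset.prod_Ioc_succ_top (by omega : t-1 ≤ t)]
      have hsing : Finset.Ioc (t-1) t = {t} := by
        ext x
        simp only [Finset.mem_Ioc, Finset.mem_singleton]
        omega
      rw [hsing, Finset.prod_singleton]
  set p : Fin (2*c*d+2) → ℕ[X] :=
    Fin.cons ((1 + Polynomial.C (t:ℕ) * Polynomial.X)^(cnt t))
      (Fin.cons ((1 + Polynomial.C ((t:ℕ)+1) * Polynomial.X)^(cnt (t+1))) (fun _ => Hp))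
    with hp
  have hprod : (∏ i, p i) = ∏ v ∈ V, (1 + Polynomial.C (NN v) * Polynomial.X) := by
    rw [Fin.prod_univ_succ, Fin.prod_univ_succ]
    simp only [hp, Fin.cons_zero, Fin.cons_succ]
    rw [Finset.prod_const, Finset.card_univ, Fintype.card_fin]
    rw [hfiber, hsplitIoc]
    ring
  have hterm : ∀ f : Fin (2*c*d+2) → ℕ, (∏ i, (p i).coeff (f i))
      = Nat.choose (cnt t) (f 0) * t ^ (f 0)
        * (Nat.choose (cnt (t+1)) (f 1) * (t+1) ^ (f 1))
        * ∏ i : Fin (2*c*d), stirling1 t (t - f i.succ.succ) := by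
    intro f
    rw [Fin.prod_univ_succ, Fin.prod_univ_succ]
    simp only [hp, Fin.cons_zero, Fin.cons_succ]
    rw [coeff_pow_one_add, coeff_pow_one_add]
    rw [← mul_assoc]
    congr 1
    refine Finset.prod_congr rfl fun i _ => ?_
    rw [hHp, coeff_stirling (t-1) (f i.succ.succ), Nat.sub_add_cancel htpos]
  calc nonattack c d m n q
      = ∑ T ∈ V.powersetCard q, ∏ v ∈ T, NN v := transversal q
    _ = (∏ v ∈ V, (1 + Polynomial.C (NN v) * Polynomial.X)).coeff q :=
        (coeff_prod_one_add V NN q).symm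
    _ = (∏ i, p i).coeff q := by rw [hprod]
    _ = ∑ f ∈ Finset.Nat.antidiagonalTuple (2*c*d+2) q, ∏ i, (p i).coeff (f i) :=
        coeff_prod_fin _ p q
    _ = _ := by
        refine Finset.sum_congr rfl fun f _ => ?_
        rw [hterm f, cnt_t, cnt_t1]
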